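/- Let (p, d, k) be Bratteli-diagram data such that d n i ≥ 1 for all n and all i : Fin (p n), such that Σ_{j : Fin (p n)} (k n i j) * (d n j) ≤ d (n+1) i for all n and all i : Fin (p (n+1)) (all slacks are nonnegative), and such that for every n and every j : Fin (p n) there exists i : Fin (p (n+1)) with k n i j ≥ 1 (the connecting maps are injective). Then there exist Bratteli-diagram data (q, e, l) with q 0 = 1, e 0 ⟨0⟩ = 1, e n i ≥ 1 for all n and i, whose slacks are nonnegative at every level and satisfy σ(n,i) ≤ 1 for every n ≥ 1 and every i : Fin (q n), together with a strictly increasing sequence ν : ℕ → ℕ such that for every m : q (ν m) = p m; e (ν m) i = d m i for every i (under the resulting identification Fin (q (ν m)) = Fin (p m)); and the ordinary matrix product l (ν (m+1) − 1) * l (ν (m+1) − 2) * ⋯ * l (ν m) of the multiplicity matrices of (q, e, l) between levels ν m and ν (m+1) equals the matrix k m. -/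

import Mathlib

/-- The ordinary product `l (m + n - 1) * ⋯ * l (m + 1) * l m` of the multiplicity matrices of
Bratteli-diagram data between levels `m` and `m + n` (the empty product being the identity). -/
def bratMatProd (q : ℕ → ℕ) (l : ∀ n, Matrix (Fin (q (n + 1))) (Fin (q n)) ℕ) (m : ℕ) :
    ∀ n : ℕ, Matrix (Fin (q (m + n))) (Fin (q m)) ℕ
  | 0 => (1 : Matrix (Fin (q m)) (Fin (q m)) ℕ)
  | n + 1 => l (m + n) * bratMatProd q l m n

namespace BratSlack

variable (p : ℕ → ℕ) (d : ∀ n, Fin (p n) → ℕ) (k : ∀ n, Fin (p (n + 1)) → Fin (p n) → ℕ)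

/-- Extended vertex counts: an extra level `0` with a single vertex. -/
def P : ℕ → ℕ
  | 0 => 1
  | m + 1 => p m

/-- Extended sizes, as a total function on `ℕ`. -/
def Dn : ℕ → ℕ → ℕ
  | 0, _ => 1
  | m + 1, i => if h : i < p m then d m ⟨i, h⟩ else 1

/-- Extended multiplicities, as total functions on `ℕ`. -/
def Kn : ℕ → ℕ → ℕ → ℕ
  | 0, _, _ => 1
  | m + 1, i, j => if h : i < p (m + 1) ∧ j < p m then k m ⟨i, h.1⟩ ⟨j, h.2⟩ else 0

/-- Row sums `∑ j, K m i j * D m j`. -/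
def Sn (m i : ℕ) : ℕ := ∑ j : Fin (P p m), Kn p k m i j.val * Dn p d m j.val

def an (m i : ℕ) : ℕ := max (Sn p d k m i) 1

/-- Number of extra identity steps after the matrix step of block `m`. -/
def t (m : ℕ) : ℕ :=
  Finset.univ.sup fun i : Fin (P p (m + 1)) => Dn p d (m + 1) i.val - an p d k m i.val

/-- Starting times of the blocks. -/
def μ : ℕ → ℕ
  | 0 => 0
  | m + 1 => μ m + 1 + t p d k m

/-- Block index of a level. -/
def c (n : ℕ) : ℕ := Nat.findGreatest (fun m => μ p d k m < n) n

def qF (n : ℕ) : ℕ := P p (if n = 0 then 0 else c p d k n + 1)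

def E (n i : ℕ) : ℕ :=
  if n = 0 then 1
  else min (an p d k (c p d k n) i + (n - μ p d k (c p d k n) - 1)) (Dn p d (c p d k n + 1) i)

def Lmat (n i j : ℕ) : ℕ :=
  if μ p d k (c p d k (n + 1)) = n then Kn p k (c p d k (n + 1)) i j
  else if i = j then 1 else 0

def lF (n : ℕ) : Matrix (Fin (qF p d k (n + 1))) (Fin (qF p d k n)) ℕ :=
  fun i j => Lmat p d k n i.val j.val

lemma mu_succ (m : ℕ) : μ p d k (m + 1) = μ p d k m + 1 + t p d k m := rfl

lemma mu_mono : StrictMono (μ p d k) :=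
  strictMono_nat_of_lt_succ fun m => by rw [mu_succ]; omega

lemma self_le_mu (m : ℕ) : m ≤ μ p d k m := by
  induction m with
  | zero => exact Nat.le_refl 0
  | succ m ih => rw [mu_succ]; omega

lemma c_eq {m n : ℕ} (h1 : μ p d k m < n) (h2 : n ≤ μ p d k (m + 1)) : c p d k n = m := by
  have h0 : μ p d k 0 = 0 := rfl
  simp only [c]
  have hm : m ≤ Nat.findGreatest (fun m => μ p d k m < n) n :=
    Nat.le_findGreatest (le_trans (self_le_mu p d k m) h1.le) h1
  have h4 := Nat.findGreatest_spec (P := fun m => μ p d k m < n) (m := 0) (Nat.zero_le n)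
    (show μ p d k 0 < n by rw [h0]; omega)
  have hub : Nat.findGreatest (fun m => μ p d k m < n) n ≤ m := by
    by_contra hcon
    push_neg at hcon
    have h3 : μ p d k (m + 1) ≤ μ p d k (Nat.findGreatest (fun m => μ p d k m < n) n) :=
      (mu_mono p d k).monotone hcon
    omega
  omega

lemma c_spec {n : ℕ} (hn : 1 ≤ n) :
    μ p d k (c p d k n) < n ∧ n ≤ μ p d k (c p d k n + 1) := by
  have h0 : μ p d k 0 = 0 := rfl
  simp only [c]
  have h4 := Nat.findGreatest_spec (P := fun m => μ p d k m < n) (m := 0) (Nat.zero_le n)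
    (show μ p d k 0 < n by rw [h0]; omega)
  refine ⟨h4, ?_⟩
  by_contra hcon
  push_neg at hcon
  have := Nat.le_findGreatest (P := fun m => μ p d k m < n)
    (le_trans (self_le_mu p d k _) hcon.le) hcon
  omega

lemma q_mu (m : ℕ) : qF p d k (μ p d k m) = P p m := by
  cases m with
  | zero => rfl
  | succ m =>
    have h1 : 1 ≤ μ p d k (m + 1) := by rw [mu_succ]; omega
    rw [qF, if_neg (by omega), c_eq p d k (mu_mono p d k (Nat.lt_succ_self m)) (le_refl _)]

lemma q_in (m r : ℕ) (h1 : 1 ≤ r) (h2 : r ≤ 1 + t p d k m) :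
    qF p d k (μ p d k m + r) = P p (m + 1) := by
  have hμ := mu_succ p d k m
  rw [qF, if_neg (by omega), c_eq p d k (show μ p d k m < μ p d k m + r by omega)
    (show μ p d k m + r ≤ μ p d k (m + 1) by omega)]

lemma Dn_pos (hd : ∀ n (i : Fin (p n)), 1 ≤ d n i) (m i : ℕ) : 1 ≤ Dn p d m i := by
  cases m with
  | zero => exact le_refl 1
  | succ m =>
    simp only [Dn]
    split
    · exact hd m _
    · exact le_refl 1

lemma Sn_le_Dn (hd : ∀ n (i : Fin (p n)), 1 ≤ d n i)
    (hslack : ∀ n (i : Fin (p (n + 1))), ∑ j, k n i j * d n j ≤ d (n + 1) i) (m i : ℕ) (hi : i < P p (m + 1)) :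
    Sn p d k m i ≤ Dn p d (m + 1) i := by
  cases m with
  | zero =>
    have h1 : Sn p d k 0 i = 1 := by
      simp [Sn, Kn, Dn, P]
      exact Finset.card_univ.trans (Fintype.card_fin _)
    rw [h1]
    exact Dn_pos p d hd 1 i
  | succ m =>
    have hi' : i < p (m + 1) := hi
    have e1 : Sn p d k (m + 1) i
        = ∑ j : Fin (p m), Kn p k (m + 1) i j.val * Dn p d (m + 1) j.val := rfl
    have e2 : ∀ j : Fin (p m), Kn p k (m + 1) i j.val * Dn p d (m + 1) j.val
        = k m ⟨i, hi'⟩ j * d m j := by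
      intro j
      simp only [Kn, Dn]
      rw [dif_pos ⟨hi', j.isLt⟩, dif_pos j.isLt]
    have e3 : Dn p d (m + 2) i = d (m + 1) ⟨i, hi'⟩ := by
      simp only [Dn]
      rw [dif_pos hi']
    rw [e1, Finset.sum_congr rfl fun j _ => e2 j, e3]
    exact hslack m ⟨i, hi'⟩

lemma an_le_Dn (hd : ∀ n (i : Fin (p n)), 1 ≤ d n i)
    (hslack : ∀ n (i : Fin (p (n + 1))), ∑ j, k n i j * d n j ≤ d (n + 1) i) (m i : ℕ) (hi : i < P p (m + 1)) :
    an p d k m i ≤ Dn p d (m + 1) i :=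
  max_le (Sn_le_Dn p d k hd hslack m i hi) (Dn_pos p d hd (m + 1) i)

lemma Dn_le_an_add_t (m i : ℕ) : Dn p d (m + 1) i ≤ an p d k m i + t p d k m := by
  have han : 1 ≤ an p d k m i := le_max_right _ _
  by_cases h : i < P p (m + 1)
  · have h1 : Dn p d (m + 1) i - an p d k m i ≤ t p d k m :=
      Finset.le_sup (f := fun i : Fin (P p (m + 1)) => Dn p d (m + 1) i.val - an p d k m i.val)
        (Finset.mem_univ (⟨i, h⟩ : Fin (P p (m + 1))))
    omega
  · have h2 : Dn p d (m + 1) i = 1 := by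
      simp only [Dn]
      rw [dif_neg (show ¬ i < p m from h)]
    omega

lemma E_mu (m i : ℕ) : E p d k (μ p d k m) i = Dn p d m i := by
  cases m with
  | zero => rfl
  | succ m =>
    have h1 : 1 ≤ μ p d k (m + 1) := by rw [mu_succ]; omega
    have hc : c p d k (μ p d k (m + 1)) = m :=
      c_eq p d k (mu_mono p d k (Nat.lt_succ_self m)) (le_refl _)
    have hμ := mu_succ p d k m
    simp only [E]
    rw [if_neg (by omega), hc,
      show μ p d k (m + 1) - μ p d k m - 1 = t p d k m by omega]
    exact min_eq_right (Dn_le_an_add_t p d k m i)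

lemma sum_step (n i : ℕ) (hi : i < qF p d k (n + 1)) :
    ∑ j : Fin (qF p d k n), Lmat p d k n i j.val * E p d k n j.val =
      if μ p d k (c p d k (n + 1)) = n then Sn p d k (c p d k (n + 1)) i
      else E p d k n i := by
  have hspec := c_spec p d k (n := n + 1) (by omega)
  by_cases hb : μ p d k (c p d k (n + 1)) = n
  · rw [if_pos hb]
    have hqn : qF p d k n = P p (c p d k (n + 1)) := by
      have h := q_mu p d k (c p d k (n + 1))
      rw [hb] at h
      exact h
    have step1 : ∑ j : Fin (qF p d k n), Lmat p d k n i j.val * E p d k n j.val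
        = ∑ j : Fin (qF p d k n),
            Kn p k (c p d k (n + 1)) i j.val * Dn p d (c p d k (n + 1)) j.val := by
      refine Finset.sum_congr rfl fun j _ => ?_
      rw [Lmat, if_pos hb]
      congr 1
      have hE := E_mu p d k (c p d k (n + 1)) j.val
      rw [hb] at hE
      exact hE
    rw [step1, Sn]
    exact Fin.sum_congr'
      (fun j : Fin (P p (c p d k (n + 1))) =>
        Kn p k (c p d k (n + 1)) i j.val * Dn p d (c p d k (n + 1)) j.val) hqn
  · rw [if_neg hb]
    have hμlt : μ p d k (c p d k (n + 1)) < n :=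
      lt_of_le_of_ne (Nat.lt_succ_iff.mp hspec.1) hb
    have hn : 1 ≤ n := by omega
    have hcn : c p d k n = c p d k (n + 1) :=
      c_eq p d k hμlt (Nat.le_of_succ_le hspec.2)
    have hq1 : qF p d k n = P p (c p d k (n + 1) + 1) := by
      rw [qF, if_neg (by omega), hcn]
    have hq2 : qF p d k (n + 1) = P p (c p d k (n + 1) + 1) := by
      rw [qF, if_neg (by omega)]
    have hi' : i < qF p d k n := by rw [hq1, ← hq2]; exact hi
    have step1 : ∀ j : Fin (qF p d k n),
        Lmat p d k n i j.val * E p d k n j.val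
          = if (⟨i, hi'⟩ : Fin (qF p d k n)) = j then E p d k n j.val else 0 := by
      intro j
      rw [Lmat, if_neg hb]
      by_cases hij : i = j.val
      · rw [if_pos hij, if_pos (Fin.ext hij), one_mul]
      · rw [if_neg hij, if_neg (fun hc => hij (congrArg Fin.val hc)), zero_mul]
    rw [Finset.sum_congr rfl fun j _ => step1 j, Finset.sum_ite_eq]
    simp

lemma slack_step (hd : ∀ n (i : Fin (p n)), 1 ≤ d n i)
    (hslack : ∀ n (i : Fin (p (n + 1))), ∑ j, k n i j * d n j ≤ d (n + 1) i) (n i : ℕ) (hi : i < qF p d k (n + 1)) :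
    (∑ j : Fin (qF p d k n), Lmat p d k n i j.val * E p d k n j.val) ≤ E p d k (n + 1) i ∧
      E p d k (n + 1) i ≤
        (∑ j : Fin (qF p d k n), Lmat p d k n i j.val * E p d k n j.val) + 1 := by
  have hspec := c_spec p d k (n := n + 1) (by omega)
  rw [sum_step p d k n i hi]
  by_cases hb : μ p d k (c p d k (n + 1)) = n
  · rw [if_pos hb]
    have hi' : i < P p (c p d k (n + 1) + 1) := by
      rw [qF, if_neg (by omega)] at hi; exact hi
    have hE : E p d k (n + 1) i = an p d k (c p d k (n + 1)) i := by
      simp only [E]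
      rw [if_neg (by omega),
        show n + 1 - μ p d k (c p d k (n + 1)) - 1 = 0 by omega, Nat.add_zero]
      exact min_eq_left (an_le_Dn p d k hd hslack _ i hi')
    rw [hE]
    exact ⟨le_max_left _ _, max_le (Nat.le_succ _) (by omega)⟩
  · rw [if_neg hb]
    have hμlt : μ p d k (c p d k (n + 1)) < n :=
      lt_of_le_of_ne (Nat.lt_succ_iff.mp hspec.1) hb
    have hn : 1 ≤ n := by omega
    have hcn : c p d k n = c p d k (n + 1) :=
      c_eq p d k hμlt (Nat.le_of_succ_le hspec.2)
    simp only [E]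
    rw [if_neg (by omega : ¬ n + 1 = 0), if_neg (by omega : ¬ n = 0), hcn,
      show n + 1 - μ p d k (c p d k (n + 1)) - 1
        = (n - μ p d k (c p d k (n + 1)) - 1) + 1 by omega]
    omega

lemma prod_entry (M r : ℕ) :
    1 ≤ r → r ≤ 1 + t p d k M →
      ∀ (i : Fin (qF p d k (μ p d k M + r))) (j : Fin (qF p d k (μ p d k M))),
        bratMatProd (qF p d k) (lF p d k) (μ p d k M) r i j = Kn p k M i.val j.val := by
  induction r with
  | zero => omega
  | succ r ih =>
    intro _ h2 i j
    have hμs := mu_succ p d k M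
    have hc1 : c p d k (μ p d k M + r + 1) = M :=
      c_eq p d k (by omega) (by omega)
    rcases Nat.eq_zero_or_pos r with h0 | hr
    · subst h0
      have hc0 : c p d k (μ p d k M + 1) = M := c_eq p d k (by omega) (by omega)
      show (lF p d k (μ p d k M) *
          (1 : Matrix (Fin (qF p d k (μ p d k M))) (Fin (qF p d k (μ p d k M))) ℕ)) i j
        = Kn p k M i.val j.val
      rw [Matrix.mul_one]
      show Lmat p d k (μ p d k M) i.val j.val = Kn p k M i.val j.val
      rw [Lmat, if_pos (by rw [hc0]), hc0]
    · have hqr : qF p d k (μ p d k M + r) = P p (M + 1) :=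
        q_in p d k M r hr (by omega)
      have hqr1 : qF p d k (μ p d k M + r + 1) = P p (M + 1) :=
        q_in p d k M (r + 1) (by omega) h2
      have hi0 : i.val < P p (M + 1) := by rw [← hqr1]; exact i.isLt
      have hi' : i.val < qF p d k (μ p d k M + r) := by rw [hqr]; exact hi0
      have hlid : ∀ z : Fin (qF p d k (μ p d k M + r)),
          Lmat p d k (μ p d k M + r) i.val z.val
            = if i.val = z.val then 1 else 0 := by
        intro z
        rw [Lmat, if_neg (by rw [hc1]; omega)]
      simp only [bratMatProd]
      rw [Matrix.mul_apply]
      have h0 : ∀ z ∈ Finset.univ, z ≠ (⟨i.val, hi'⟩ : Fin (qF p d k (μ p d k M + r))) →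
          lF p d k (μ p d k M + r) i z
            * bratMatProd (qF p d k) (lF p d k) (μ p d k M) r z j = 0 := by
        intro z _ hne
        have hz : lF p d k (μ p d k M + r) i z = 0 := by
          show Lmat p d k (μ p d k M + r) i.val z.val = 0
          rw [hlid z, if_neg (fun hcon => hne (Fin.ext hcon.symm))]
        rw [hz, zero_mul]
      have h1 : (⟨i.val, hi'⟩ : Fin (qF p d k (μ p d k M + r))) ∉ Finset.univ →
          lF p d k (μ p d k M + r) i ⟨i.val, hi'⟩
            * bratMatProd (qF p d k) (lF p d k) (μ p d k M) r ⟨i.val, hi'⟩ j = 0 :=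
        fun h => absurd (Finset.mem_univ _) h
      rw [Finset.sum_eq_single _ h0 h1]
      have hone : lF p d k (μ p d k M + r) i ⟨i.val, hi'⟩ = 1 := by
        show Lmat p d k (μ p d k M + r) i.val i.val = 1
        rw [hlid ⟨i.val, hi'⟩, if_pos rfl]
      rw [hone, one_mul]
      exact ih hr (by omega) ⟨i.val, hi'⟩ j

end BratSlack

/-- Given Bratteli-diagram data `(p, d, k)` with all sizes `≥ 1`, all slacks
nonnegative, and injective connecting maps, there are Bratteli-diagram data `(q, e, l)` with
`q 0 = 1`, `e 0 ⟨0⟩ = 1`, all sizes `≥ 1`, nonnegative slacks which are `≤ 1` at every level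
`≥ 1`, and a strictly increasing `ν : ℕ → ℕ` such that `(q, e)` at level `ν m` agrees with
`(p, d)` at level `m` and the product of the multiplicity matrices of `(q, e, l)` between
levels `ν m` and `ν (m+1)` is the matrix `k m`. -/
theorem exists_bratteli_with_small_slack
    (p : ℕ → ℕ) (d : ∀ n, Fin (p n) → ℕ)
    (k : ∀ n, Fin (p (n + 1)) → Fin (p n) → ℕ)
    (hd : ∀ n (i : Fin (p n)), 1 ≤ d n i)
    (hslack : ∀ n (i : Fin (p (n + 1))), ∑ j, k n i j * d n j ≤ d (n + 1) i)
    (hinj : ∀ n (j : Fin (p n)), ∃ i : Fin (p (n + 1)), 1 ≤ k n i j) :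
    ∃ (q : ℕ → ℕ) (e : ∀ n, Fin (q n) → ℕ)
      (l : ∀ n, Matrix (Fin (q (n + 1))) (Fin (q n)) ℕ)
      (hq0 : q 0 = 1),
      e 0 ⟨0, by omega⟩ = 1 ∧
      (∀ n (i : Fin (q n)), 1 ≤ e n i) ∧
      (∀ n (i : Fin (q (n + 1))), ∑ j, l n i j * e n j ≤ e (n + 1) i) ∧
      (∀ n (i : Fin (q (n + 1))), e (n + 1) i ≤ (∑ j, l n i j * e n j) + 1) ∧
      ∃ (ν : ℕ → ℕ) (hν : StrictMono ν) (hq : ∀ m, q (ν m) = p m),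
        (∀ m (i : Fin (p m)), e (ν m) (Fin.cast (hq m).symm i) = d m i) ∧
        (∀ m (i : Fin (p (m + 1))) (j : Fin (p m)),
          bratMatProd q l (ν m) (ν (m + 1) - ν m)
            (Fin.cast
              (((hq (m + 1)).symm).trans
                (congrArg q (Nat.add_sub_cancel' (hν.monotone (Nat.le_succ m)))).symm) i)
            (Fin.cast (hq m).symm j)
          = k m i j) := by
  classical
  open BratSlack in
  have hqm : ∀ m, qF p d k (μ p d k (m + 1)) = p m := fun m => q_mu p d k (m + 1)
  have hmono : StrictMono (fun m => BratSlack.μ p d k (m + 1)) :=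
    fun a b hab => BratSlack.mu_mono p d k (Nat.succ_lt_succ hab)
  -- size ≥ 1
  have hpos : ∀ n (i : Fin (BratSlack.qF p d k n)), 1 ≤ BratSlack.E p d k n i.val := by
    intro n i
    cases n with
    | zero => exact le_refl 1
    | succ n =>
      rw [BratSlack.E, if_neg (by omega)]
      refine le_min ?_ (BratSlack.Dn_pos p d hd _ _)
      exact le_trans (le_max_right _ 1) (Nat.le_add_right _ _)
  -- matched sizes
  have hmatch : ∀ m (i : Fin (p m)),
      BratSlack.E p d k (BratSlack.μ p d k (m + 1)) i.val = d m i := by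
    intro m i
    rw [BratSlack.E_mu]
    simp only [BratSlack.Dn]
    rw [dif_pos i.isLt]
  -- matrix products
  have hprod : ∀ m (i : Fin (p (m + 1))) (j : Fin (p m))
      (i' : Fin (BratSlack.qF p d k
        (BratSlack.μ p d k (m + 1) + (BratSlack.μ p d k (m + 1 + 1) - BratSlack.μ p d k (m + 1)))))
      (j' : Fin (BratSlack.qF p d k (BratSlack.μ p d k (m + 1)))),
      i'.val = i.val → j'.val = j.val →
      bratMatProd (BratSlack.qF p d k) (BratSlack.lF p d k) (BratSlack.μ p d k (m + 1))
        (BratSlack.μ p d k (m + 1 + 1) - BratSlack.μ p d k (m + 1)) i' j' = k m i j := by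
    intro m i j i' j' hii hjj
    have hμs := BratSlack.mu_succ p d k (m + 1)
    have h1 : 1 ≤ BratSlack.μ p d k (m + 1 + 1) - BratSlack.μ p d k (m + 1) := by omega
    have h2 : BratSlack.μ p d k (m + 1 + 1) - BratSlack.μ p d k (m + 1)
        ≤ 1 + BratSlack.t p d k (m + 1) := by omega
    rw [BratSlack.prod_entry p d k (m + 1) _ h1 h2 i' j', hii, hjj]
    show BratSlack.Kn p k (m + 1) i.val j.val = k m i j
    rw [BratSlack.Kn, dif_pos ⟨i.isLt, j.isLt⟩]
  refine ⟨BratSlack.qF p d k, fun n i => BratSlack.E p d k n i.val, BratSlack.lF p d k, rfl,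
    rfl, hpos, fun n i => (BratSlack.slack_step p d k hd hslack n i.val i.isLt).1,
    fun n i => (BratSlack.slack_step p d k hd hslack n i.val i.isLt).2,
    fun m => BratSlack.μ p d k (m + 1), hmono, hqm, fun m i => hmatch m i, ?_⟩
  intro m i j
  exact hprod m i j _ _ rfl rfl
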